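/- For every nonzero ξ ∈ ℝ³ and each j ∈ {1,2,3}, if ξ is parallel to the j-th standard basis vector e_j (i.e. ξ = c·e_j with c ≠ 0 real), then π⁺(ξ) A_j π⁺(ξ) = sign(c)·π⁺(ξ), while for k ≠ j one has π⁺(ξ) A_k π⁺(ξ) = 0. -/
import Mathlib

open Matrix

noncomputable def A1 : Matrix (Fin 2) (Fin 2) ℂ := !![1, 0; 0, -1]
noncomputable def A2 : Matrix (Fin 2) (Fin 2) ℂ := !![0, 1; 1, 0]
noncomputable def A3 : Matrix (Fin 2) (Fin 2) ℂ := !![0, Complex.I; -Complex.I, 0]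
noncomputable def PA : Fin 3 → Matrix (Fin 2) (Fin 2) ℂ := ![A1, A2, A3]

noncomputable def Amat (ξ : Fin 3 → ℂ) : Matrix (Fin 2) (Fin 2) ℂ :=
  ξ 0 • A1 + ξ 1 • A2 + ξ 2 • A3

lemma sandwich1 (Aj : Matrix (Fin 2) (Fin 2) ℂ) (hA : Aj * Aj = 1)
    (c' n' : ℂ) (hn : n' ≠ 0) (h2 : n' * n' = c' * c') :
    ((2 * n')⁻¹ • (c' • Aj + n' • 1)) * Aj * ((2 * n')⁻¹ • (c' • Aj + n' • 1)) =
      (c' / n') • ((2 * n')⁻¹ • (c' • Aj + n' • 1)) := by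
  simp only [smul_mul_assoc, mul_smul_comm, mul_add, add_mul, smul_add, smul_smul,
    mul_one, one_mul, mul_assoc, hA]
  match_scalars
  · linear_combination (n'⁻¹^2/4) * h2
  · ring

lemma sandwich0 (Aj Ak : Matrix (Fin 2) (Fin 2) ℂ) (hA : Aj * Aj = 1)
    (hac : Aj * Ak = -(Ak * Aj)) (c' n' : ℂ) (h2 : n' * n' = c' * c') :
    ((2 * n')⁻¹ • (c' • Aj + n' • 1)) * Ak * ((2 * n')⁻¹ • (c' • Aj + n' • 1)) = 0 := by
  simp only [smul_mul_assoc, mul_smul_comm, mul_add, add_mul, smul_add, smul_smul,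
    mul_one, one_mul, mul_assoc, hac, mul_neg, neg_mul, smul_neg, hA, mul_one]
  match_scalars
  · linear_combination (n'⁻¹^2/4) * h2
  · ring

/-- If `ξ = c eⱼ` with `c ≠ 0` real, then `π⁺(ξ) Aⱼ π⁺(ξ) = sign(c) π⁺(ξ)` and
`π⁺(ξ) Aₖ π⁺(ξ) = 0` for `k ≠ j`. -/
theorem pauli_sandwich_basis (j : Fin 3) (c : ℝ) (hc : c ≠ 0) :
    ∀ ξ : Fin 3 → ℝ, ξ = Pi.single j c →
    ∀ n : ℝ, n = Real.sqrt (ξ 0 ^ 2 + ξ 1 ^ 2 + ξ 2 ^ 2) →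
    ∀ πp : Matrix (Fin 2) (Fin 2) ℂ,
      πp = (2 * (n : ℂ))⁻¹ • (Amat (fun i => (ξ i : ℂ)) + (n : ℂ) • 1) →
      (πp * PA j * πp = ((Real.sign c : ℝ) : ℂ) • πp ∧
       ∀ k : Fin 3, k ≠ j → πp * PA k * πp = 0) := by
  intro ξ hξ n hn πp hπp
  have hsq : ∀ i, PA i * PA i = 1 := by
    intro i
    fin_cases i <;>
      · ext a b
        fin_cases a <;> fin_cases b <;>
          simp [PA, A1, A2, A3, Matrix.mul_apply, Fin.sum_univ_two, Matrix.one_apply,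
            Complex.I_mul_I]
  have hac : ∀ i k : Fin 3, i ≠ k → PA i * PA k = -(PA k * PA i) := by
    intro i k hik
    fin_cases i <;> fin_cases k <;> first
      | exact absurd rfl hik
      | · ext a b
          fin_cases a <;> fin_cases b <;>
            simp [PA, A1, A2, A3, Matrix.mul_apply, Fin.sum_univ_two, Complex.I_mul_I]
  have hnc : n = |c| := by
    subst hn hξ
    fin_cases j <;>
      simp [Pi.single_apply, ← Real.sqrt_sq_eq_abs] <;> ring_nf
  have hn0 : ((n : ℝ) : ℂ) ≠ 0 := by
    rw [hnc]; simpa [abs_eq_zero] using hc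
  have h2 : ((n : ℝ) : ℂ) * n = (c : ℂ) * c := by
    rw [hnc]; norm_cast; exact abs_mul_abs_self c
  have hAmat : Amat (fun i => (ξ i : ℂ)) = (c : ℂ) • PA j := by
    subst hξ
    fin_cases j <;>
      simp [Amat, PA, Pi.single_apply, smul_add] <;> abel
  have hsign : (c : ℂ) / (n : ℂ) = ((Real.sign c : ℝ) : ℂ) := by
    rw [hnc]
    rcases hc.lt_or_gt with h | h
    · rw [abs_of_neg h, Real.sign_of_neg h]
      have hc' : (c : ℂ) ≠ 0 := by exact_mod_cast hc
      push_cast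
      field_simp
    · rw [abs_of_pos h, Real.sign_of_pos h]
      have hc' : (c : ℂ) ≠ 0 := by exact_mod_cast hc
      push_cast
      field_simp
  rw [hAmat] at hπp
  subst hπp
  refine ⟨?_, ?_⟩
  · rw [← hsign]
    exact sandwich1 (PA j) (hsq j) _ _ hn0 h2
  · intro k hk
    exact sandwich0 (PA j) (PA k) (hsq j) (hac j k (Ne.symm hk)) _ _ h2
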